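/- Upper bound for one telescoping term: for 2 ≤ i ≤ k and every t ∈ (A_{i−1}, A_i], P[T^{M^{i−1}} > t] − P[T^{M^i} > t] ≤ P(B_{i−1}) · sup_{x ≤ l^{i−1}_{A_{i−1}}} [ ψ( l^i_{A_i} − x, t − A_{i−1} ) − ψ( l^{i−1}_{A_i} − x, t − A_{i−1} ) ] ≤ P(B_{i−1}) · ψ( u_{i−1}, t − A_{i−1} ), where ψ(v,s) := P[sup_{0<τ≤s} R_τ > v] and the last step uses l^i_{A_i} − l^{i−1}_{A_{i−1}} = u_{i−1}. -/

import Mathlib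

open MeasureTheory ProbabilityTheory Set

noncomputable section

/-- The net outgo process `R` of a Cramér–Lundberg model (compound Poisson minus linear
premium): `R 0 = 0`, càdlàg (right-continuous) paths, stationary independent increments,
each `R t` measurable. -/
structure CLProcess (Ω : Type) [MeasurableSpace Ω] (P : Measure Ω) where
  R : ℝ → Ω → ℝ
  meas : ∀ t, Measurable (R t)
  zero : ∀ ω, R 0 ω = 0
  cadlag : ∀ ω t, ContinuousWithinAt (fun s => R s ω) (Set.Ici t) t
  indep_incr : ∀ a : ℝ, 0 ≤ a →
    IndepFun (fun ω (s : ℝ) => R (a + s) ω - R a ω)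
      (fun ω (s : Set.Icc (0:ℝ) a) => R s.1 ω) P
  stat_incr : ∀ a : ℝ, 0 ≤ a →
    P.map (fun ω (s : ℝ) => R (a + s) ω - R a ω) = P.map (fun ω (s : ℝ) => R s ω)

variable {Ω : Type} [MeasurableSpace Ω]

/-- infinite-horizon ruin probability `ψ(u) = P[sup_{t>0} R_t > u]` -/
def psiInf (P : Measure Ω) (M : CLProcess Ω P) (u : ℝ) : ℝ :=
  (P {ω | ∃ t ∈ Set.Ioi (0:ℝ), M.R t ω > u}).toReal

/-- infinite-horizon survival probability `ψ̄(u) = 1 − ψ(u)` -/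
def psiBarInf (P : Measure Ω) (M : CLProcess Ω P) (u : ℝ) : ℝ := 1 - psiInf P M u

/-- finite-horizon ruin probability `ψ(u,t) = P[sup_{0<s≤t} R_s > u]` -/
def psiFin (P : Measure Ω) (M : CLProcess Ω P) (u t : ℝ) : ℝ :=
  (P {ω | ∃ s ∈ Set.Ioc (0:ℝ) t, M.R s ω > u}).toReal

/-- finite-horizon survival probability `ψ̄(u,t) = 1 − ψ(u,t)` -/
def psiBarFin (P : Measure Ω) (M : CLProcess Ω P) (u t : ℝ) : ℝ := 1 - psiFin P M u t

/-- Capital level `l^i_t` of the comparison model `M^i`: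
`l^i_t = Σ_{j=0}^m u_j` if `t ∈ (A_m, A_{m+1}]` for some `m < i` (equivalently `t ≤ A_i`,
where `m` is the largest index with `A_m < t`), and
`l^i_t = Σ_{j=0}^i u_j + Σ_{j=i+1}^k u_j·e^{−r(A_j−A_i)}` for `t > A_i`
(with the convention `A_{k+1} = ∞`). -/
def lvl (A u : ℕ → ℝ) (r : ℝ) (k i : ℕ) (t : ℝ) : ℝ :=
  if A i < t then
    (∑ j ∈ Finset.range (i + 1), u j)
      + ∑ j ∈ Finset.Icc (i + 1) k, u j * Real.exp (-(r * (A j - A i)))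
  else
    ∑ j ∈ Finset.range (((Finset.range (k + 1)).filter (fun m => A m < t)).card), u j

/-- `P[T^{M^i} ≤ t]`: finite-time ruin probability of the comparison model `M^i`,
whose ruin time is `T^{M^i} = inf{t>0 : R_t > l^i_t}`. -/
def modelRuin (P : Measure Ω) (M : CLProcess Ω P) (A u : ℕ → ℝ) (r : ℝ) (k i : ℕ)
    (t : ℝ) : ℝ :=
  (P {ω | ∃ s ∈ Set.Ioc (0:ℝ) t, M.R s ω > lvl A u r k i s}).toReal

/-- `Δ(t) := P[T^{M^k} ≤ t] − P[T^{M_r} ≤ t]`, where `M_r = M^0` is the no-alarm model. -/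
def Delta (P : Measure Ω) (M : CLProcess Ω P) (A u : ℕ → ℝ) (r : ℝ) (k : ℕ) (t : ℝ) : ℝ :=
  modelRuin P M A u r k k t - modelRuin P M A u r k 0 t

/-- `P[T^{M^i} > t]`: finite-time survival probability of the comparison model `M^i`. -/
def modelSurv (P : Measure Ω) (M : CLProcess Ω P) (A u : ℕ → ℝ) (r : ℝ) (k i : ℕ)
    (t : ℝ) : ℝ :=
  (P {ω | ∀ s ∈ Set.Ioc (0:ℝ) t, M.R s ω ≤ lvl A u r k i s}).toReal

/-- `B_i := {T^{M^k} > A_i}`, the event of no ruin up to `A_i` under the alarm system. -/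
def Bset (P : Measure Ω) (M : CLProcess Ω P) (A u : ℕ → ℝ) (r : ℝ) (k i : ℕ) : Set Ω :=
  {ω | ∀ s ∈ Set.Ioc (0:ℝ) (A i), M.R s ω ≤ lvl A u r k k s}


/-- right-continuous function bounded on countable dense subset is bounded on Ioc -/
lemma rc_discrete (f : ℝ → ℝ) (hf : ∀ τ, ContinuousWithinAt f (Ici τ) τ)
    (b c v : ℝ)
    (hq : ∀ q ∈ Ioo b c, (∃ ρ : ℚ, (ρ:ℝ) = q) → f q ≤ v) (hc : f c ≤ v) :
    ∀ s ∈ Ioc b c, f s ≤ v := by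
  intro s hs
  by_contra hlt
  push_neg at hlt
  rcases eq_or_lt_of_le hs.2 with h | h
  · exact absurd (h ▸ hc) (not_le.2 (h ▸ hlt))
  · have h1 : f ⁻¹' (Ioi v) ∈ nhdsWithin s (Ici s) :=
      (hf s) (Ioi_mem_nhds hlt)
    rw [mem_nhdsWithin] at h1
    obtain ⟨U, hU, hsU, hsub⟩ := h1
    obtain ⟨ε, hε, hball⟩ := Metric.isOpen_iff.1 hU s hsU
    obtain ⟨ρ, hρ1, hρ2⟩ := exists_rat_btwn (lt_min (lt_add_of_pos_right s hε) h : s < min (s + ε) c)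
    have hmem : (ρ:ℝ) ∈ U := hball (by
      simp only [Metric.mem_ball, Real.dist_eq, abs_lt]
      constructor <;> nlinarith [lt_min_iff.1 hρ2])
    have : f ρ ≤ v := hq ρ ⟨hs.1.trans hρ1, (lt_min_iff.1 hρ2).2⟩ ⟨ρ, rfl⟩
    exact absurd (hsub ⟨hmem, le_of_lt hρ1⟩) (not_lt.2 this)

section lvlFacts
variable {A u : ℕ → ℝ} {r : ℝ} {k : ℕ}

lemma A_mono (hAmono : ∀ i, i < k → A i < A (i + 1)) :
    ∀ {m n : ℕ}, m < n → n ≤ k → A m < A n := by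
  intro m n h hk
  induction n with
  | zero => omega
  | succ n ih =>
    rcases Nat.lt_succ_iff_lt_or_eq.1 h with h' | h'
    · exact (ih h' (by omega)).trans (hAmono n (by omega))
    · exact h' ▸ hAmono n (by omega)

lemma A_mono_le (hAmono : ∀ i, i < k → A i < A (i + 1)) :
    ∀ {m n : ℕ}, m ≤ n → n ≤ k → A m ≤ A n := by
  intro m n h hk
  rcases eq_or_lt_of_le h with h' | h'
  · exact h' ▸ le_refl _
  · exact (A_mono hAmono h' hk).le

/-- value of `lvl` on the segment `(A m, A (m+1)]`, when below the alarm index. -/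
lemma lvl_seg (hAmono : ∀ i, i < k → A i < A (i + 1))
    {K m : ℕ} (hmK : m + 1 ≤ K) (hKk : K ≤ k) {s : ℝ}
    (h1 : A m < s) (h2 : s ≤ A (m + 1)) :
    lvl A u r k K s = ∑ j ∈ Finset.range (m + 1), u j := by
  have hns : ¬ A K < s := not_lt.2 (h2.trans (A_mono_le hAmono hmK hKk))
  rw [lvl, if_neg hns]
  have : (Finset.range (k + 1)).filter (fun n => A n < s) = Finset.range (m + 1) := by
    ext n
    simp only [Finset.mem_filter, Finset.mem_range]
    constructor
    · rintro ⟨hn, hAn⟩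
      by_contra hc
      push_neg at hc
      have : A (m+1) ≤ A n := A_mono_le hAmono hc (by omega)
      linarith
    · intro hn
      refine ⟨by omega, ?_⟩
      calc A n ≤ A m := A_mono_le hAmono (by omega) (by omega)
        _ < s := h1
  rw [this, Finset.card_range]

/-- any point of `(0, A n]` lies in a segment, given `A 0 = 0`. -/
lemma seg_exists (hA0 : A 0 = 0) (hAmono : ∀ i, i < k → A i < A (i + 1))
    {n : ℕ} (hn : n ≤ k) {s : ℝ} (hs : s ∈ Ioc 0 (A n)) :
    ∃ m, m < n ∧ A m < s ∧ s ≤ A (m + 1) := by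
  induction n with
  | zero => exact absurd (hA0 ▸ hs.2) (not_le.2 hs.1)
  | succ n ih =>
    by_cases h : s ≤ A n
    · obtain ⟨m, hm1, hm2⟩ := ih (by omega) ⟨hs.1, h⟩
      exact ⟨m, by omega, hm2⟩
    · exact ⟨n, by omega, not_le.1 h, hs.2⟩

end lvlFacts

/-- upper bound for one telescoping term. For `2 ≤ i ≤ k` and
`t ∈ (A_{i−1}, A_i]`,
`P[T^{M^{i−1}}>t] − P[T^{M^i}>t]`
`≤ P(B_{i−1})·sup_{x ≤ l^{i−1}_{A_{i−1}}}[ψ(l^i_{A_i}−x, t−A_{i−1}) − ψ(l^{i−1}_{A_i}−x, t−A_{i−1})]`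
`≤ P(B_{i−1})·ψ(u_{i−1}, t−A_{i−1})`. -/
theorem telescoping_term_upper_bound
    (P : Measure Ω) [IsProbabilityMeasure P] (M : CLProcess Ω P)
    (A u : ℕ → ℝ) (r : ℝ) (k : ℕ) (hk : 1 ≤ k)
    (hA0 : A 0 = 0) (hAmono : ∀ i, i < k → A i < A (i + 1))
    (hu : ∀ j, 0 < u j) (hr : 0 < r)
    (i : ℕ) (hi2 : 2 ≤ i) (hik : i ≤ k)
    (t : ℝ) (ht1 : A (i - 1) < t) (ht2 : t ≤ A i) :
    modelSurv P M A u r k (i - 1) t - modelSurv P M A u r k i t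
        ≤ (P (Bset P M A u r k (i - 1))).toReal
          * sSup ((fun x : ℝ =>
              psiFin P M (lvl A u r k i (A i) - x) (t - A (i - 1))
                - psiFin P M (lvl A u r k (i - 1) (A i) - x) (t - A (i - 1)))
            '' Set.Iic (lvl A u r k (i - 1) (A (i - 1))))
    ∧ (P (Bset P M A u r k (i - 1))).toReal
          * sSup ((fun x : ℝ =>
              psiFin P M (lvl A u r k i (A i) - x) (t - A (i - 1))
                - psiFin P M (lvl A u r k (i - 1) (A i) - x) (t - A (i - 1)))
            '' Set.Iic (lvl A u r k (i - 1) (A (i - 1))))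
        ≤ (P (Bset P M A u r k (i - 1))).toReal * psiFin P M (u (i - 1)) (t - A (i - 1)) := by
  obtain ⟨n, rfl⟩ : ∃ n, i = n + 1 := ⟨i - 1, by omega⟩
  simp only [Nat.add_sub_cancel] at *
  have hn1 : 1 ≤ n := by omega
  have hnk : n + 1 ≤ k := hik
  -- abbreviations
  set a := A n with ha_def
  set s0 := t - a with hs0_def
  set L0 := lvl A u r k (n + 1) (A (n + 1)) with hL0_def
  set L1 := lvl A u r k n (A (n + 1)) with hL1_def
  set c := lvl A u r k n a with hc_def
  have ha0 : 0 < a := hA0 ▸ A_mono hAmono (by omega : 0 < n) (by omega)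
  have ha : (0:ℝ) ≤ a := ha0.le
  have hs0 : 0 < s0 := by simp only [hs0_def]; linarith
  have hat : a < t := ht1
  -- level computations
  have hL0sum : L0 = ∑ j ∈ Finset.range (n + 1), u j :=
    lvl_seg hAmono (le_refl (n+1)) hnk (hAmono n (by omega)) (le_refl _)
  have hcsum : c = ∑ j ∈ Finset.range n, u j := by
    have := lvl_seg (A := A) (u := u) (r := r) hAmono
      (show (n-1)+1 ≤ n by omega) (by omega) (s := a)
      (by rw [ha_def, (by omega : n = (n-1)+1)]; exact hAmono (n-1) (by omega))
      (by rw [ha_def]; exact le_of_eq (congrArg A (by omega)))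
    rw [hc_def, this, (by omega : n - 1 + 1 = n)]
  have hcsumk : lvl A u r k k a = ∑ j ∈ Finset.range n, u j := by
    have := lvl_seg (A := A) (u := u) (r := r) hAmono
      (show (n-1)+1 ≤ k by omega) (le_refl k) (s := a)
      (by rw [ha_def, (by omega : n = (n-1)+1)]; exact hAmono (n-1) (by omega))
      (by rw [ha_def]; exact le_of_eq (congrArg A (by omega)))
    rw [this, (by omega : n - 1 + 1 = n)]
  have hL0c : L0 - c = u n := by
    rw [hL0sum, hcsum, Finset.sum_range_succ]; ring
  have hL01 : L0 ≤ L1 := by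
    rw [hL0sum, hL1_def, lvl, if_pos (hAmono n (by omega))]
    have : (0:ℝ) ≤ ∑ j ∈ Finset.Icc (n + 1) k, u j * Real.exp (-(r * (A j - A n))) :=
      Finset.sum_nonneg fun j _ => le_of_lt (mul_pos (hu j) (Real.exp_pos _))
    linarith
  -- level values on the segments
  have hpast : ∀ s ∈ Ioc 0 a, ∀ K, n ≤ K → K ≤ k → lvl A u r k K s = lvl A u r k k s := by
    intro s hs K h1K h2K
    obtain ⟨m, hm, hm1, hm2⟩ := seg_exists hA0 hAmono (by omega : n ≤ k) hs
    rw [lvl_seg hAmono (by omega : m+1 ≤ K) h2K hm1 hm2,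
      lvl_seg hAmono (by omega : m+1 ≤ k) (le_refl k) hm1 hm2]
  have hcur_seg : ∀ s ∈ Ioc a t, lvl A u r k (n+1) s = L0 := by
    intro s hs
    rw [hL0sum]
    exact lvl_seg hAmono (le_refl (n+1)) hnk hs.1 (hs.2.trans ht2)
  have hprev_seg : ∀ s ∈ Ioc a t, lvl A u r k n s = L1 := by
    intro s hs
    rw [hL1_def, lvl, lvl, if_pos hs.1, if_pos (hAmono n (by omega))]
  -- maps into path spaces
  set Y : Ω → ℝ → ℝ := fun ω s => M.R (a + s) ω - M.R a ω with hY_def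
  set Z : Ω → (Icc (0:ℝ) a) → ℝ := fun ω s => M.R s.1 ω with hZ_def
  set R₀ : Ω → ℝ → ℝ := fun ω s => M.R s ω with hR₀_def
  have hYm : Measurable Y := measurable_pi_lambda _ fun s => (M.meas _).sub (M.meas a)
  have hZm : Measurable Z := measurable_pi_lambda _ fun s => M.meas s.1
  have hR₀m : Measurable R₀ := measurable_pi_lambda _ fun s => M.meas s
  -- countable index sets
  set Dfut : Set ℝ := (Set.range ((↑) : ℚ → ℝ) ∩ Ioo 0 s0) ∪ {s0} with hDfut_def
  set Dpast : Set ℝ := (Set.range ((↑) : ℚ → ℝ) ∩ Ioc 0 a) ∪ (A '' {m | 1 ≤ m ∧ m ≤ n})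
    with hDpast_def
  have hDfut_cnt : Dfut.Countable :=
    (((Set.countable_range _).mono inter_subset_left).union (countable_singleton _))
  have hDpast_cnt : Dpast.Countable :=
    (((Set.countable_range _).mono inter_subset_left).union ((Set.to_countable _).image A))
  have hDfut_sub : Dfut ⊆ Ioc 0 s0 := by
    rintro q (⟨-, hq⟩ | hq)
    · exact ⟨hq.1, hq.2.le⟩
    · rw [mem_singleton_iff] at hq; subst hq; exact ⟨hs0, le_refl _⟩
  have hDpast_sub : Dpast ⊆ Ioc 0 a := by
    rintro q (⟨-, hq⟩ | ⟨m, hm, rfl⟩)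
    · exact hq
    · have hm' : 1 ≤ m ∧ m ≤ n := hm
      exact ⟨hA0 ▸ A_mono hAmono (by omega : 0 < m) (by omega),
        A_mono_le hAmono hm'.2 (by omega)⟩
  have hs0Dfut : s0 ∈ Dfut := Or.inr rfl
  have haDpast : a ∈ Dpast := Or.inr ⟨n, ⟨hn1, le_refl n⟩, rfl⟩
  -- path-space events
  set ca : ↥(Icc (0:ℝ) a) := ⟨a, ⟨ha, le_refl a⟩⟩ with hca_def
  set G : Set ((Icc (0:ℝ) a) → ℝ) :=
    {z | ∀ q : Icc (0:ℝ) a, (q:ℝ) ∈ Dpast → z q ≤ lvl A u r k k q} with hG_def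
  set H : ℝ → Set (ℝ → ℝ) := fun w => {f | ∀ q ∈ Dfut, f q ≤ w} with hH_def
  set E : Set ((ℝ → ℝ) × ((Icc (0:ℝ) a) → ℝ)) :=
    {p | p.2 ∈ G ∧ p.1 ∈ H (L1 - p.2 ca) ∧ p.1 ∉ H (L0 - p.2 ca)} with hE_def
  -- measurability of path-space events
  have hGm : MeasurableSet G := by
    have : G = ⋂ q ∈ {q : ↥(Icc (0:ℝ) a) | (q:ℝ) ∈ Dpast},
        {z : (Icc (0:ℝ) a) → ℝ | z q ≤ lvl A u r k k q} := by
      ext z; simp [hG_def, Set.mem_iInter]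
    rw [this]
    exact MeasurableSet.biInter (hDpast_cnt.preimage Subtype.val_injective)
      fun q _ => measurableSet_le (measurable_pi_apply q) measurable_const
  have hHm : ∀ w, MeasurableSet (H w) := by
    intro w
    have : H w = ⋂ q ∈ Dfut, {f : ℝ → ℝ | f q ≤ w} := by
      ext f; simp [hH_def, Set.mem_iInter]
    rw [this]
    exact MeasurableSet.biInter hDfut_cnt
      fun q _ => measurableSet_le (measurable_pi_apply q) measurable_const
  have hEHm : ∀ L : ℝ, MeasurableSet {p : (ℝ → ℝ) × ((Icc (0:ℝ) a) → ℝ) |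
      ∀ q ∈ Dfut, p.1 q ≤ L - p.2 ca} := by
    intro L
    have : {p : (ℝ → ℝ) × ((Icc (0:ℝ) a) → ℝ) | ∀ q ∈ Dfut, p.1 q ≤ L - p.2 ca}
        = ⋂ q ∈ Dfut, {p : (ℝ → ℝ) × ((Icc (0:ℝ) a) → ℝ) | p.1 q ≤ L - p.2 ca} := by
      ext p; simp [Set.mem_iInter]
    rw [this]
    exact MeasurableSet.biInter hDfut_cnt fun q _ =>
      measurableSet_le (measurable_fst.eval) (measurable_const.sub (measurable_snd.eval))
  have hEm : MeasurableSet E := by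
    have : E = (Prod.snd ⁻¹' G)
        ∩ ({p : (ℝ → ℝ) × ((Icc (0:ℝ) a) → ℝ) | ∀ q ∈ Dfut, p.1 q ≤ L1 - p.2 ca}
          ∩ {p : (ℝ → ℝ) × ((Icc (0:ℝ) a) → ℝ) | ∀ q ∈ Dfut, p.1 q ≤ L0 - p.2 ca}ᶜ) := by
      ext p; simp only [hE_def, mem_setOf_eq, mem_inter_iff, mem_preimage, mem_compl_iff,
        hH_def]
    rw [this]
    exact (hGm.preimage measurable_snd).inter ((hEHm L1).inter (hEHm L0).compl)
  -- identification of preimages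
  have hHsurv : ∀ w : ℝ, R₀ ⁻¹' (H w) = {ω | ∀ s ∈ Ioc 0 s0, M.R s ω ≤ w} := by
    intro w
    ext ω
    constructor
    · intro h
      refine rc_discrete (fun s => M.R s ω) (M.cadlag ω) 0 s0 w ?_ ?_
      · intro q hq hratq
        exact h q (Or.inl ⟨(by rwa [Set.mem_range] : q ∈ Set.range ((↑) : ℚ → ℝ)), hq⟩)
      · exact h s0 hs0Dfut
    · intro h q hq
      exact h q (hDfut_sub hq)
  have hBZ : Z ⁻¹' G = Bset P M A u r k n := by
    ext ω
    constructor
    · intro h s hs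
      obtain ⟨m, hm, hm1, hm2⟩ := seg_exists hA0 hAmono (by omega : n ≤ k) hs
      have hlvl_s : lvl A u r k k s = ∑ j ∈ Finset.range (m+1), u j :=
        lvl_seg hAmono (by omega : m+1 ≤ k) (le_refl k) hm1 hm2
      rw [hlvl_s]
      have hAm0 : (0:ℝ) ≤ A m := hA0 ▸ A_mono_le hAmono (by omega) (by omega)
      have hAm1a : A (m+1) ≤ a := A_mono_le hAmono (by omega : m+1 ≤ n) (by omega)
      refine rc_discrete (fun τ => M.R τ ω) (M.cadlag ω) (A m) (A (m+1)) _ ?_ ?_ s ⟨hm1, hm2⟩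
      · intro q hq hratq
        have hqa : q ∈ Ioc 0 a := ⟨lt_of_le_of_lt hAm0 hq.1, hq.2.le.trans hAm1a⟩
        have hqD : q ∈ Dpast := Or.inl ⟨(by rwa [Set.mem_range]), hqa⟩
        have := h (⟨q, ⟨hqa.1.le, hqa.2⟩⟩ : Icc (0:ℝ) a) hqD
        rwa [lvl_seg hAmono (by omega : m+1 ≤ k) (le_refl k) hq.1 hq.2.le] at this
      · have hqa : A (m+1) ∈ Ioc 0 a :=
          ⟨hA0 ▸ A_mono hAmono (by omega : 0 < m+1) (by omega), hAm1a⟩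
        have hqD : A (m+1) ∈ Dpast := Or.inr ⟨m+1, ⟨by omega, by omega⟩, rfl⟩
        have := h (⟨A (m+1), ⟨hqa.1.le, hqa.2⟩⟩ : Icc (0:ℝ) a) hqD
        rwa [lvl_seg hAmono (by omega : m+1 ≤ k) (le_refl k) (hAmono m (by omega))
          (le_refl _)] at this
    · intro h q hq
      exact h q.1 (hDpast_sub hq)
  -- value at time a on the B event
  have hxc : ∀ ω, ω ∈ Bset P M A u r k n → M.R a ω ≤ c := by
    intro ω hω
    have := hω a ⟨ha0, le_refl a⟩
    rwa [hcsumk, ← hcsum] at this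
  -- probability measure instances and basic measure computations
  haveI : IsProbabilityMeasure (P.map Y) := Measure.isProbabilityMeasure_map hYm.aemeasurable
  haveI : IsProbabilityMeasure (P.map Z) := Measure.isProbabilityMeasure_map hZm.aemeasurable
  set pRuin : ℝ → ENNReal := fun w => P {ω | ∃ s ∈ Ioc 0 s0, M.R s ω > w} with hpRuin_def
  have hcompl : ∀ w : ℝ, {ω | ∀ s ∈ Ioc 0 s0, M.R s ω ≤ w}
      = {ω | ∃ s ∈ Ioc 0 s0, M.R s ω > w}ᶜ := by
    intro w
    ext ω
    constructor
    · rintro h hcon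
      obtain ⟨s, hs, hgt⟩ := hcon
      exact absurd (h s hs) (not_le.2 hgt)
    · intro h s hs
      by_contra hc
      exact h ⟨s, hs, not_le.1 hc⟩
  have hmapY : P.map Y = P.map R₀ := M.stat_incr a ha
  have hYHc : ∀ w : ℝ, (P.map Y) (H w)ᶜ = pRuin w := by
    intro w
    rw [hmapY, Measure.map_apply hR₀m (hHm w).compl, preimage_compl, hHsurv w, hcompl w,
      compl_compl]
  have hRuinMono : ∀ w w' : ℝ, w ≤ w' → pRuin w' ≤ pRuin w := by
    intro w w' h
    exact measure_mono fun ω hω => by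
      obtain ⟨s, hs, hgt⟩ := hω; exact ⟨s, hs, lt_of_le_of_lt h hgt⟩
  have hpsiFin : ∀ w : ℝ, psiFin P M w s0 = (pRuin w).toReal := fun w => rfl
  have hdiff : ∀ x : ℝ, (P.map Y) (H (L1 - x) \ H (L0 - x))
      = ENNReal.ofReal (psiFin P M (L0 - x) s0 - psiFin P M (L1 - x) s0) := by
    intro x
    have hss : H (L0 - x) ⊆ H (L1 - x) := fun f hf q hq => (hf q hq).trans (by linarith)
    have h1 : H (L1 - x) \ H (L0 - x) = (H (L0 - x))ᶜ \ (H (L1 - x))ᶜ := by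
      ext f; simp only [mem_diff, mem_compl_iff]; tauto
    rw [h1, measure_diff (compl_subset_compl.2 hss) (hHm _).compl.nullMeasurableSet
      (measure_ne_top _ _), hYHc, hYHc]
    have hmono : pRuin (L1 - x) ≤ pRuin (L0 - x) := hRuinMono _ _ (by linarith)
    rw [hpsiFin, hpsiFin, ← ENNReal.toReal_sub_of_le hmono (measure_ne_top _ _),
      ENNReal.ofReal_toReal (ENNReal.sub_ne_top (measure_ne_top _ _))]
  -- the supremum
  set SS := sSup ((fun x : ℝ => psiFin P M (L0 - x) s0 - psiFin P M (L1 - x) s0) '' Iic c)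
    with hSS_def
  have hub : ∀ x ∈ Iic c, psiFin P M (L0 - x) s0 - psiFin P M (L1 - x) s0
      ≤ psiFin P M (u n) s0 := by
    intro x hx
    rw [mem_Iic] at hx
    have h2 : psiFin P M (L0 - x) s0 ≤ psiFin P M (u n) s0 := by
      rw [hpsiFin, hpsiFin]
      exact ENNReal.toReal_mono (measure_ne_top _ _) (hRuinMono _ _ (by linarith))
    have h3 : 0 ≤ psiFin P M (L1 - x) s0 := ENNReal.toReal_nonneg
    linarith
  have hbdd : BddAbove ((fun x : ℝ => psiFin P M (L0 - x) s0 - psiFin P M (L1 - x) s0)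
      '' Iic c) := ⟨psiFin P M (u n) s0, by rintro _ ⟨x, hx, rfl⟩; exact hub x hx⟩
  have hgS : ∀ x ∈ Iic c, psiFin P M (L0 - x) s0 - psiFin P M (L1 - x) s0 ≤ SS :=
    fun x hx => le_csSup hbdd ⟨x, hx, rfl⟩
  have hS0 : (0:ℝ) ≤ SS := by
    have hcc : psiFin P M (L1 - c) s0 ≤ psiFin P M (L0 - c) s0 := by
      rw [hpsiFin, hpsiFin]
      exact ENNReal.toReal_mono (measure_ne_top _ _) (hRuinMono _ _ (by linarith))
    have := hgS c (mem_Iic.2 le_rfl)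
    linarith
  -- the events of the two comparison models
  set Sprev : Set Ω := {ω | ∀ s ∈ Ioc 0 t, M.R s ω ≤ lvl A u r k n s} with hSprev_def
  set Scur : Set Ω := {ω | ∀ s ∈ Ioc 0 t, M.R s ω ≤ lvl A u r k (n+1) s} with hScur_def
  have hsub : Scur ⊆ Sprev := by
    intro ω h s hs
    have := h s hs
    by_cases hsa : s ≤ a
    · rwa [hpast s ⟨hs.1, hsa⟩ (n+1) (by omega) hnk,
        ← hpast s ⟨hs.1, hsa⟩ n (le_refl n) (by omega)] at this
    · push_neg at hsa
      rw [hprev_seg s ⟨hsa, hs.2⟩]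
      rw [hcur_seg s ⟨hsa, hs.2⟩] at this
      linarith
  -- the key inclusion
  have hforward : Sprev \ Scur ⊆ (fun ω => (Y ω, Z ω)) ⁻¹' E := by
    rintro ω ⟨hS, hNS⟩
    have hSp : ∀ s ∈ Ioc 0 t, M.R s ω ≤ lvl A u r k n s := hS
    refine ⟨?_, ?_, ?_⟩
    · intro q hq
      have hqa := hDpast_sub hq
      have hqt : (q:ℝ) ∈ Ioc 0 t := ⟨hqa.1, hqa.2.trans hat.le⟩
      have := hSp q hqt
      rwa [hpast q hqa n (le_refl n) (by omega)] at this
    · intro q hq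
      have hq' := hDfut_sub hq
      have hq2 : q ≤ s0 := hq'.2
      have hmem : a + q ∈ Ioc a t :=
        ⟨lt_add_of_pos_right a hq'.1, by simp only [hs0_def] at hq2; linarith⟩
      have hle : M.R (a + q) ω ≤ L1 := by
        rw [← hprev_seg _ hmem]
        exact hSp _ ⟨lt_trans ha0 hmem.1, hmem.2⟩
      show M.R (a + q) ω - M.R a ω ≤ L1 - M.R a ω
      linarith
    · intro hcon
      apply hNS
      intro s hs
      by_cases hsa : s ≤ a
      · have := hSp s hs
        rwa [hpast s ⟨hs.1, hsa⟩ n (le_refl n) (by omega),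
          ← hpast s ⟨hs.1, hsa⟩ (n+1) (by omega) hnk] at this
      · push_neg at hsa
        rw [hcur_seg s ⟨hsa, hs.2⟩]
        have hfc : ∀ τ : ℝ, ContinuousWithinAt (fun τ' => M.R (a + τ') ω) (Ici τ) τ := by
          intro τ
          exact (M.cadlag ω (a + τ)).comp
            ((continuous_const.add continuous_id).continuousWithinAt)
            (fun τ' hτ' => add_le_add_right hτ' a)
        have hb : ∀ τ ∈ Ioc 0 s0, M.R (a + τ) ω ≤ L0 := by
          refine rc_discrete _ hfc 0 s0 L0 ?_ ?_
          · intro q hq hrat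
            have hcq : M.R (a + q) ω - M.R a ω ≤ L0 - M.R a ω :=
              hcon q (Or.inl ⟨by rwa [Set.mem_range], hq⟩)
            linarith
          · have hcq : M.R (a + s0) ω - M.R a ω ≤ L0 - M.R a ω := hcon s0 hs0Dfut
            linarith
        have hsm : s - a ∈ Ioc 0 s0 := ⟨by linarith, by simp only [hs0_def]; linarith [hs.2]⟩
        have := hb (s - a) hsm
        have heq : a + (s - a) = s := by ring
        rwa [heq] at this
  -- the core estimate
  have hcore : P (Sprev \ Scur) ≤ ENNReal.ofReal SS * P (Bset P M A u r k n) := by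
    have hprodeq : P.map (fun ω => (Y ω, Z ω)) = (P.map Y).prod (P.map Z) :=
      (indepFun_iff_map_prod_eq_prod_map_map hYm.aemeasurable hZm.aemeasurable).1
        (M.indep_incr a ha)
    calc P (Sprev \ Scur) ≤ P ((fun ω => (Y ω, Z ω)) ⁻¹' E) := measure_mono hforward
      _ = (P.map (fun ω => (Y ω, Z ω))) E :=
          (Measure.map_apply (hYm.prodMk hZm) hEm).symm
      _ = ((P.map Y).prod (P.map Z)) E := by rw [hprodeq]
      _ = ∫⁻ z, (P.map Y) ((fun f => (f, z)) ⁻¹' E) ∂(P.map Z) :=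
          Measure.prod_apply_symm hEm
      _ = ∫⁻ z, G.indicator
            (fun z' => (P.map Y) (H (L1 - z' ca) \ H (L0 - z' ca))) z ∂(P.map Z) := by
          apply lintegral_congr
          intro z
          by_cases hz : z ∈ G
          · rw [indicator_of_mem hz]
            congr 1
            ext f
            rw [mem_preimage, mem_diff]
            exact ⟨fun h => ⟨h.2.1, h.2.2⟩, fun h => ⟨hz, h.1, h.2⟩⟩
          · rw [indicator_of_notMem hz]
            have hemp : ((fun f => (f, z)) ⁻¹' E) = ∅ := by
              ext f
              simp only [mem_preimage, mem_empty_iff_false, iff_false]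
              intro h
              exact hz h.1
            rw [hemp, measure_empty]
      _ = ∫⁻ z in G, (P.map Y) (H (L1 - z ca) \ H (L0 - z ca)) ∂(P.map Z) :=
          lintegral_indicator hGm _
      _ ≤ ∫⁻ z in G, ENNReal.ofReal SS ∂(P.map Z) := by
          apply setLIntegral_mono measurable_const
          intro z hz
          rw [hdiff (z ca)]
          apply ENNReal.ofReal_le_ofReal
          apply hgS
          have hzc : z ca ≤ lvl A u r k k a := hz ca haDpast
          rw [hcsumk] at hzc
          exact mem_Iic.2 (le_of_le_of_eq hzc hcsum.symm)
      _ = ENNReal.ofReal SS * (P.map Z) G := setLIntegral_const _ _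
      _ = ENNReal.ofReal SS * P (Bset P M A u r k n) := by
          rw [Measure.map_apply hZm hGm, hBZ]
  -- assembling the two inequalities
  have e1 : modelSurv P M A u r k n t = (P Sprev).toReal := rfl
  have e2 : modelSurv P M A u r k (n+1) t = (P Scur).toReal := rfl
  constructor
  · rw [e1, e2]
    have hip : P Sprev ≤ P Scur + P (Sprev \ Scur) := by
      have := measure_le_inter_add_diff P Sprev Scur
      rwa [Set.inter_eq_right.mpr hsub] at this
    have h5 : (P Sprev).toReal ≤ (P Scur).toReal + (P (Sprev \ Scur)).toReal := by
      rw [← ENNReal.toReal_add (measure_ne_top _ _) (measure_ne_top _ _)]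
      exact ENNReal.toReal_mono
        (ENNReal.add_ne_top.2 ⟨measure_ne_top _ _, measure_ne_top _ _⟩) hip
    have h6 : (P (Sprev \ Scur)).toReal ≤ SS * (P (Bset P M A u r k n)).toReal := by
      have := ENNReal.toReal_mono
        (ENNReal.mul_ne_top ENNReal.ofReal_ne_top (measure_ne_top _ _)) hcore
      rwa [ENNReal.toReal_mul, ENNReal.toReal_ofReal hS0] at this
    rw [mul_comm]
    linarith
  · exact mul_le_mul_of_nonneg_left
      (Real.sSup_le (by rintro _ ⟨x, hx, rfl⟩; exact hub x hx) ENNReal.toReal_nonneg)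
      ENNReal.toReal_nonneg
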